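/- Let Q be symmetric positive semidefinite, T satisfy the averagedness inequality ‖T b1 − T b2‖_Q² ≤ (1−α+αξ²)‖b1−b2‖_Q² − ((1−α)/α)‖(I−T)b1−(I−T)b2‖_Q² with α ∈ (0,1), ξ ∈ (0,1], and let b⋆ be a fixed point of T, b^{k+1} = T b^k. Then the sequential error decays at rate O(1/√k): ‖b^{k+1} − b^k‖_Q² ≤ (1/(k+1)) · (α/(1−α)) · ‖b^0 − b⋆‖_Q² for all k ∈ ℕ. -/

import Mathlib

open Matrix Finset

/-- Q-quadratic form: `‖a‖_Q² = ⟨Q a, a⟩`. -/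
noncomputable def qnorm {n : ℕ} (Q : Matrix (Fin n) (Fin n) ℝ) (a : Fin n → ℝ) : ℝ :=
  Q.mulVec a ⬝ᵥ a

/-- Q-based pairing: `⟨a, b⟩_Q = ⟨Q a, b⟩`. -/
noncomputable def qinner {n : ℕ} (Q : Matrix (Fin n) (Fin n) ℝ) (a b : Fin n → ℝ) : ℝ :=
  Q.mulVec a ⬝ᵥ b

lemma qnorm_neg {n : ℕ} (Q : Matrix (Fin n) (Fin n) ℝ) (a : Fin n → ℝ) :
    qnorm Q (-a) = qnorm Q a := by
  simp [qnorm, Matrix.mulVec_neg]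

theorem stmt14 (n : ℕ) (Q : Matrix (Fin n) (Fin n) ℝ) (hQs : Qᵀ = Q)
    (hQp : ∀ a, 0 ≤ qnorm Q a) (α ξ : ℝ)
    (hα : 0 < α) (hα1 : α < 1) (hξ : 0 < ξ) (hξ1 : ξ ≤ 1)
    (T : (Fin n → ℝ) → (Fin n → ℝ))
    (hT : ∀ b1 b2, qnorm Q (T b1 - T b2) ≤ (1 - α + α * ξ ^ 2) * qnorm Q (b1 - b2)
      - (1 - α) / α * qnorm Q ((b1 - T b1) - (b2 - T b2)))
    (bstar : Fin n → ℝ) (hfix : T bstar = bstar)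
    (b : ℕ → (Fin n → ℝ)) (hb : ∀ k, b (k + 1) = T (b k)) :
    ∀ k : ℕ, qnorm Q (b (k + 1) - b k) ≤
      1 / ((k : ℝ) + 1) * (α / (1 - α)) * qnorm Q (b 0 - bstar) := by
  set c : ℝ := (1 - α) / α with hc
  have hcpos : 0 < c := div_pos (by linarith) hα
  set d : ℕ → ℝ := fun k => qnorm Q (b (k + 1) - b k) with hd
  set e : ℕ → ℝ := fun k => qnorm Q (b k - bstar) with he
  have hξsq : ξ ^ 2 ≤ 1 := by nlinarith
  have hcoef : 1 - α + α * ξ ^ 2 ≤ 1 := by nlinarith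
  -- e (k+1) ≤ e k - c * d k
  have key1 : ∀ k, e (k + 1) + c * d k ≤ e k := by
    intro k
    have h := hT (b k) bstar
    rw [hfix, ← hb k] at h
    have hdk : qnorm Q (b k - b (k + 1)) = d k := by
      rw [show b k - b (k+1) = -(b (k+1) - b k) by ring, qnorm_neg]
    have hrw : b k - b (k+1) - (bstar - bstar) = b k - b (k+1) := by simp
    rw [hrw, hdk] at h
    have h1 : (1 - α + α * ξ ^ 2) * qnorm Q (b k - bstar) ≤ qnorm Q (b k - bstar) := by
      nlinarith [hQp (b k - bstar)]
    simp only [he, hc] at *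
    linarith
  -- d (k+1) ≤ d k
  have key2 : ∀ k, d (k + 1) ≤ d k := by
    intro k
    have h := hT (b (k + 1)) (b k)
    rw [← hb (k+1), ← hb k] at h
    have h1 : (1 - α + α * ξ ^ 2) * qnorm Q (b (k+1) - b k) ≤ qnorm Q (b (k+1) - b k) := by
      nlinarith [hQp (b (k+1) - b k)]
    have h2 := hQp (b (k+1) - b (k+2) - (b k - b (k+1)))
    have h3 := mul_nonneg hcpos.le h2
    simp only [hd, hc] at *
    linarith
  have hdanti : Antitone d := antitone_nat_of_succ_le key2
  -- sum bound
  have sum_bd : ∀ k, c * ∑ j ∈ range (k + 1), d j ≤ e 0 := by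
    intro k
    have : ∀ k, c * ∑ j ∈ range (k + 1), d j ≤ e 0 - e (k + 1) := by
      intro k
      induction k with
      | zero =>
        rw [Finset.sum_range_one]
        linarith [key1 0]
      | succ m ih =>
        rw [Finset.sum_range_succ, mul_add]
        have := key1 (m + 1)
        linarith
    have h := this k
    have := hQp (b (k + 1) - bstar)
    simp only [he] at *
    linarith
  intro k
  have hlb : ((k : ℝ) + 1) * d k ≤ ∑ j ∈ range (k + 1), d j := by
    have : ∑ j ∈ range (k + 1), d k ≤ ∑ j ∈ range (k + 1), d j :=
      Finset.sum_le_sum (fun j hj => hdanti (Nat.lt_succ_iff.mp (Finset.mem_range.mp hj)))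
    simpa [Finset.sum_const, Finset.card_range, nsmul_eq_mul, add_comm] using this
  have hkpos : (0:ℝ) < (k : ℝ) + 1 := by positivity
  have hfin : c * (((k : ℝ) + 1) * d k) ≤ e 0 := by
    have := mul_le_mul_of_nonneg_left hlb hcpos.le
    linarith [sum_bd k]
  have : d k ≤ e 0 / (c * ((k : ℝ) + 1)) := by
    rw [le_div_iff₀ (by positivity)]
    nlinarith
  calc d k ≤ e 0 / (c * ((k : ℝ) + 1)) := this
    _ = 1 / ((k : ℝ) + 1) * (α / (1 - α)) * e 0 := by
        field_simp [hc]
        rw [hc]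
        field_simp [hα.ne', (sub_pos.mpr hα1).ne']
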